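/- Let (X,ρ) be a complete metric space and f : X → ℝ ∪ {+∞} a proper, lower semicontinuous, bounded from below function. If for every x ∈ X with inf f(X) < f(x) there exists y_x ∈ X \ {x} such that f(y_x) + ρ(x, y_x) ≤ f(x), then there exists x₀ ∈ X such that f(x₀) = inf f(X). -/

import Mathlib

/-- Takahashi's principle: let `(X,ρ)` be a complete metric space and `f : X → ℝ ∪ {+∞}`
a proper, lower semicontinuous, bounded below function. If for every `x` with
`inf f(X) < f(x)` there is `y_x ≠ x` with `f(y_x) + ρ(x,y_x) ≤ f(x)`, then `f` attains
its infimum at some `x₀ ∈ X`. -/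
theorem takahashi_principle {X : Type*} [MetricSpace X] [CompleteSpace X]
    (f : X → EReal)
    (hproper : ∃ x, f x ≠ ⊤)
    (hlsc : LowerSemicontinuous f)
    (hbdd : ∃ c : ℝ, ∀ x, (c : EReal) ≤ f x)
    (h : ∀ x : X, (⨅ z, f z) < f x →
      ∃ y : X, y ≠ x ∧ f y + ((dist x y : ℝ) : EReal) ≤ f x) :
    ∃ x₀ : X, f x₀ = ⨅ z, f z := by
  classical
  obtain ⟨c, hc⟩ := hbdd
  obtain ⟨p, hp⟩ := hproper
  by_contra hcon
  push_neg at hcon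
  have hnb : ∀ x, f x ≠ ⊥ := fun x => ((EReal.bot_lt_coe c).trans_le (hc x)).ne'
  have hmlt : ∀ x, (⨅ z, f z) < f x := fun x => (iInf_le f x).lt_of_ne (Ne.symm (hcon x))
  set S : X → Set X := fun x => {y | f y + ((dist x y : ℝ) : EReal) ≤ f x} with hS
  have hxS : ∀ x, x ∈ S x := by
    intro x
    simp only [hS, Set.mem_setOf_eq, dist_self]
    simp
  have hfleS : ∀ {x y : X}, y ∈ S x → f y ≤ f x := by
    intro x y hy
    refine le_trans ?_ hy
    exact le_add_of_nonneg_right (by exact_mod_cast dist_nonneg)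
  have hStrans : ∀ {x y z : X}, y ∈ S x → z ∈ S y → z ∈ S x := by
    intro x y z hy hz
    have h1 : f z + ((dist x z : ℝ) : EReal) ≤ (f z + ((dist y z : ℝ) : EReal)) + ((dist x y : ℝ) : EReal) := by
      rw [add_assoc, ← EReal.coe_add]
      refine add_le_add_right ?_ _
      exact_mod_cast (by linarith [dist_triangle x y z] : dist x z ≤ dist y z + dist x y)
    calc f z + ((dist x z : ℝ) : EReal)
        ≤ (f z + ((dist y z : ℝ) : EReal)) + ((dist x y : ℝ) : EReal) := h1
      _ ≤ f y + ((dist x y : ℝ) : EReal) := add_le_add_left hz _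
      _ ≤ f x := hy
  have htopS : ∀ {x y : X}, f x ≠ ⊤ → y ∈ S x → f y ≠ ⊤ := by
    intro x y hx hy ht
    exact hx (top_le_iff.1 (ht ▸ hfleS hy))
  -- the infimum over S x
  have hcInf : ∀ x : X, (c : EReal) ≤ sInf (f '' S x) := by
    intro x
    refine le_sInf ?_
    rintro _ ⟨y, _, rfl⟩
    exact hc y
  have hInfle : ∀ x : X, sInf (f '' S x) ≤ f x := fun x => sInf_le ⟨x, hxS x, rfl⟩
  have step : ∀ x : X, f x ≠ ⊤ → ∀ ε : ℝ, 0 < ε →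
      ∃ y, y ∈ S x ∧ f y < sInf (f '' S x) + (ε : EReal) := by
    intro x hx ε hε
    have hne_top : sInf (f '' S x) ≠ ⊤ := fun ht => hx (top_le_iff.1 (ht ▸ hInfle x))
    have hne_bot : sInf (f '' S x) ≠ ⊥ := fun hb => by
      have := hcInf x
      rw [hb] at this
      exact absurd this (by simp)
    obtain ⟨r, hr⟩ : ∃ r : ℝ, sInf (f '' S x) = (r : EReal) :=
      ⟨_, (EReal.coe_toReal hne_top hne_bot).symm⟩
    have hlt : sInf (f '' S x) < sInf (f '' S x) + (ε : EReal) := by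
      rw [hr, ← EReal.coe_add]
      exact_mod_cast lt_add_of_pos_right r hε
    obtain ⟨_, ⟨y, hyS, rfl⟩, hy⟩ := sInf_lt_iff.1 hlt
    exact ⟨y, hyS, hy⟩
  set ε : ℕ → ℝ := fun n => (1 / 2 : ℝ) ^ n with hε
  have hεpos : ∀ n, 0 < ε n := fun n => by positivity
  -- the sequence
  set a : ℕ → X := fun n => Nat.rec p
    (fun n x => if hx : f x = ⊤ then x else Classical.choose (step x hx (ε n) (hεpos n))) n
    with ha
  have ha0 : a 0 = p := rfl
  have hasucc : ∀ n, a (n + 1) =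
      if hx : f (a n) = ⊤ then a n
      else Classical.choose (step (a n) hx (ε n) (hεpos n)) := fun n => rfl
  have hatop : ∀ n, f (a n) ≠ ⊤ := by
    intro n
    induction n with
    | zero => exact hp
    | succ n ih =>
      rw [hasucc n, dif_neg ih]
      exact htopS ih (Classical.choose_spec (step (a n) ih (ε n) (hεpos n))).1
  have haspec : ∀ n, a (n + 1) ∈ S (a n) ∧
      f (a (n + 1)) < sInf (f '' S (a n)) + (ε n : EReal) := by
    intro n
    rw [hasucc n, dif_neg (hatop n)]
    exact Classical.choose_spec (step (a n) (hatop n) (ε n) (hεpos n))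
  set F : ℕ → ℝ := fun n => (f (a n)).toReal with hF
  have hFn : ∀ n, ((F n : ℝ) : EReal) = f (a n) := fun n =>
    EReal.coe_toReal (hatop n) (hnb (a n))
  have hstepR : ∀ n, F (n + 1) + dist (a n) (a (n + 1)) ≤ F n := by
    intro n
    have := (haspec n).1
    simp only [hS, Set.mem_setOf_eq] at this
    rw [← hFn n, ← hFn (n + 1), ← EReal.coe_add] at this
    exact_mod_cast this
  have hFanti : Antitone F := antitone_nat_of_succ_le fun n => by
    have := hstepR n
    have hd := dist_nonneg (x := a n) (y := a (n + 1))
    linarith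
  have hcF : ∀ n, c ≤ F n := by
    intro n
    have := hc (a n)
    rw [← hFn n] at this
    exact_mod_cast this
  have hdtel : ∀ n k, dist (a n) (a (n + k)) ≤ F n - F (n + k) := by
    intro n k
    induction k with
    | zero => simp
    | succ k ih =>
      calc dist (a n) (a (n + (k + 1)))
          ≤ dist (a n) (a (n + k)) + dist (a (n + k)) (a (n + k + 1)) := dist_triangle _ _ _
        _ ≤ (F n - F (n + k)) + (F (n + k) - F (n + k + 1)) := by
            have := hstepR (n + k)
            have := ih
            linarith
        _ = F n - F (n + (k + 1)) := by ring_nf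
  have hddist : ∀ n k, n ≤ k → dist (a n) (a k) ≤ F n - F k := by
    intro n k hnk
    obtain ⟨j, rfl⟩ := Nat.exists_eq_add_of_le hnk
    exact hdtel n j
  have hbddF : BddBelow (Set.range F) := ⟨c, by rintro _ ⟨n, rfl⟩; exact hcF n⟩
  set L : ℝ := ⨅ n, F n with hL
  have hFL : Filter.Tendsto F Filter.atTop (nhds L) := tendsto_atTop_ciInf hFanti hbddF
  have hLle : ∀ n, L ≤ F n := fun n => ciInf_le hbddF n
  have hcauchy : CauchySeq a := by
    refine cauchySeq_of_le_tendsto_0 (fun N => F N - L) ?_ ?_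
    · intro n m N hn hm
      rcases le_total n m with hnm | hnm
      · calc dist (a n) (a m) ≤ F n - F m := hddist n m hnm
          _ ≤ F N - L := by have := hFanti hn; have := hLle m; linarith
      · rw [dist_comm]
        calc dist (a m) (a n) ≤ F m - F n := hddist m n hnm
          _ ≤ F N - L := by have := hFanti hm; have := hLle n; linarith
    · have := hFL.sub (tendsto_const_nhds (x := L))
      simpa using this
  obtain ⟨x₀, hx₀⟩ := cauchySeq_tendsto_of_complete hcauchy
  -- f x₀ ≤ L
  have hfx₀ : f x₀ ≤ (L : EReal) := by
    by_contra hlt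
    push_neg at hlt
    obtain ⟨y, hLy, hyf⟩ := exists_between hlt
    have hyt : y ≠ ⊤ := hyf.ne_top
    have hyb : y ≠ ⊥ := ((EReal.bot_lt_coe L).trans hLy).ne'
    obtain ⟨r, rfl⟩ : ∃ r : ℝ, y = (r : EReal) := ⟨_, (EReal.coe_toReal hyt hyb).symm⟩
    have hev : ∀ᶠ n in Filter.atTop, (r : EReal) < f (a n) :=
      hx₀.eventually (hlsc x₀ _ hyf)
    have hrF : ∀ᶠ n in Filter.atTop, r ≤ F n := by
      filter_upwards [hev] with n hn
      rw [← hFn n] at hn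
      exact_mod_cast hn.le
    have : r ≤ L := ge_of_tendsto hFL hrF
    exact absurd hLy (by exact_mod_cast this.not_gt)
  -- x₀ ∈ S (a n) for all n
  have hx₀S : ∀ n, x₀ ∈ S (a n) := by
    intro n
    have hdn : dist (a n) x₀ ≤ F n - L := by
      have htend : Filter.Tendsto (fun k => dist (a n) (a k)) Filter.atTop
          (nhds (dist (a n) x₀)) := tendsto_const_nhds.dist hx₀
      refine le_of_tendsto htend ?_
      filter_upwards [Filter.eventually_ge_atTop n] with k hk
      calc dist (a n) (a k) ≤ F n - F k := hddist n k hk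
        _ ≤ F n - L := by have := hLle k; linarith
    simp only [hS, Set.mem_setOf_eq]
    calc f x₀ + ((dist (a n) x₀ : ℝ) : EReal)
        ≤ (L : EReal) + ((F n - L : ℝ) : EReal) :=
          add_le_add hfx₀ (by exact_mod_cast hdn)
      _ = ((F n : ℝ) : EReal) := by rw [← EReal.coe_add]; norm_num
      _ = f (a n) := hFn n
  -- final contradiction
  obtain ⟨y, hyne, hyS⟩ := h x₀ (hmlt x₀)
  have hyfnetop : f y ≠ ⊤ := htopS (hatop 0) (hStrans (hx₀S 0) hyS)
  obtain ⟨ry, hry⟩ : ∃ r : ℝ, f y = (r : EReal) :=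
    ⟨_, (EReal.coe_toReal hyfnetop (hnb y)).symm⟩
  have hdsmall : ∀ n, dist x₀ y < ε n := by
    intro n
    have h1 : f y + ((dist x₀ y : ℝ) : EReal) ≤ f x₀ := hyS
    have h2 : f x₀ ≤ f (a (n + 1)) := hfleS (hx₀S (n + 1))
    have h3 : f (a (n + 1)) < sInf (f '' S (a n)) + (ε n : EReal) := (haspec n).2
    have h4 : sInf (f '' S (a n)) ≤ f y := sInf_le ⟨y, hStrans (hx₀S n) hyS, rfl⟩
    have h5 : f y + ((dist x₀ y : ℝ) : EReal) < f y + (ε n : EReal) := by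
      calc f y + ((dist x₀ y : ℝ) : EReal) ≤ f x₀ := h1
        _ ≤ f (a (n + 1)) := h2
        _ < sInf (f '' S (a n)) + (ε n : EReal) := h3
        _ ≤ f y + (ε n : EReal) := add_le_add_left h4 _
    rw [hry, ← EReal.coe_add, ← EReal.coe_add] at h5
    have h6 : ry + dist x₀ y < ry + ε n := by exact_mod_cast h5
    linarith
  have hεto0 : Filter.Tendsto ε Filter.atTop (nhds 0) := by
    apply tendsto_pow_atTop_nhds_zero_of_lt_one <;> norm_num
  have hd0 : dist x₀ y ≤ 0 :=
    ge_of_tendsto hεto0 (Filter.Eventually.of_forall fun n => (hdsmall n).le)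
  exact hyne (dist_eq_zero.1 (le_antisymm hd0 dist_nonneg)).symm
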